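/- The squared deviation of the posterior standard deviation from the prior standard deviation √λ, integrated over the domain of future predictions, satisfies ∫_S ∫_{t₀}^{+∞} (√λ − σ_D(x,t))² dt dx ≤ λ²·Tr(Δ⁻¹ C), where C is the n×n matrix with entries C_{ij} = (k_S⋆k_S)(x_j − x_i)·(k_T⋆k_T)_{t₀−t_i}^{+∞}(t_j − t_i). -/

import Mathlib

open Matrix MeasureTheory
set_option maxHeartbeats 1000000

lemma shift_indicator (G : ℝ → ℝ) (a c : ℝ) :
    (Set.Ioi a).indicator (fun t => G (t - c)) = fun t => (Set.Ioi (a - c)).indicator G (t - c) := by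
  funext t
  simp [Set.indicator_apply, Set.mem_Ioi, sub_lt_sub_iff_right]

lemma shift_Ioi_integral (G : ℝ → ℝ) (a c : ℝ) :
    ∫ t in Set.Ioi a, G (t - c) = ∫ τ in Set.Ioi (a - c), G τ := by
  rw [← integral_indicator measurableSet_Ioi, ← integral_indicator measurableSet_Ioi,
    ← integral_sub_right_eq_self (fun τ => (Set.Ioi (a - c)).indicator G τ) c]
  exact congrArg _ (shift_indicator G a c)

lemma shift_Ioi_integrable {G : ℝ → ℝ} {a c : ℝ} (hG : IntegrableOn G (Set.Ioi (a - c))) :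
    IntegrableOn (fun t => G (t - c)) (Set.Ioi a) := by
  have h1 := ((integrable_indicator_iff measurableSet_Ioi).2 hG).comp_sub_right (μ := volume) c
  rw [← shift_indicator] at h1
  exact (integrable_indicator_iff measurableSet_Ioi).1 h1

theorem stmt_9
    (d n : ℕ) (hd : 1 ≤ d) (hn : 1 ≤ n)
    (lam sig : ℝ) (hlam : 0 < lam) (hsig : 0 < sig)
    (kS kT : ℝ → ℝ)
    (hkSmeas : Measurable kS) (hkTmeas : Measurable kT)
    (hkSrange : ∀ r, kS r ∈ Set.Icc (0 : ℝ) 1) (hkTrange : ∀ r, kT r ∈ Set.Icc (0 : ℝ) 1)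
    (hkS0 : kS 0 = 1) (hkT0 : kT 0 = 1)
    (k : (EuclideanSpace ℝ (Fin d) × ℝ) → (EuclideanSpace ℝ (Fin d) × ℝ) → ℝ)
    (hk : ∀ p q, k p q = lam * kS (‖p.1 - q.1‖) * kT (|p.2 - q.2|))
    (pts : Fin n → EuclideanSpace ℝ (Fin d) × ℝ)
    (Δ : Matrix (Fin n) (Fin n) ℝ)
    (hΔ : ∀ i j, Δ i j = k (pts i) (pts j) + sig ^ 2 * (if i = j then 1 else 0))
    (hPD : Δ.PosDef)
    (σ2D : (EuclideanSpace ℝ (Fin d) × ℝ) → ℝ)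
    (hσ2D : ∀ p, σ2D p = lam -
      (fun i : Fin n => k p (pts i)) ⬝ᵥ Δ⁻¹ *ᵥ (fun i : Fin n => k p (pts i)))
    (hborder : ∀ p : EuclideanSpace ℝ (Fin d) × ℝ,
      (Matrix.fromBlocks
        (Matrix.of fun (_ : Fin 1) (_ : Fin 1) => lam)
        (Matrix.of fun (_ : Fin 1) (j : Fin n) => k p (pts j))
        (Matrix.of fun (i : Fin n) (_ : Fin 1) => k p (pts i))
        Δ).PosSemidef)
    (σD : (EuclideanSpace ℝ (Fin d) × ℝ) → ℝ)
    (hσD : ∀ p, σD p = Real.sqrt (σ2D p))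
    (convS : EuclideanSpace ℝ (Fin d) → ℝ)
    (hconvS : ∀ v, convS v = ∫ u : EuclideanSpace ℝ (Fin d), kS ‖u‖ * kS ‖v - u‖)
    (convT : ℝ → ℝ → ℝ)
    (hconvT : ∀ a' s, convT a' s = ∫ τ in Set.Ioi a', kT |τ| * kT |s - τ|)
    (hintS : ∀ v : EuclideanSpace ℝ (Fin d),
      Integrable (fun u : EuclideanSpace ℝ (Fin d) => kS ‖u‖ * kS ‖v - u‖))
    (hintT : ∀ a' s : ℝ, IntegrableOn (fun τ => kT |τ| * kT |s - τ|) (Set.Ioi a'))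
    (t0 : ℝ) (S : Set (EuclideanSpace ℝ (Fin d))) (hS : MeasurableSet S)
    (C : Matrix (Fin n) (Fin n) ℝ)
    (hC : ∀ i j, C i j =
      convS ((pts j).1 - (pts i).1) * convT (t0 - (pts i).2) ((pts j).2 - (pts i).2)) :
    (∫ x in S, ∫ t in Set.Ioi t0, (Real.sqrt lam - σD (x, t)) ^ 2)
      ≤ lam ^ 2 * (Δ⁻¹ * C).trace := by
  classical
  -- abbreviations
  set g : Fin n → EuclideanSpace ℝ (Fin d) → ℝ := fun i x => kS ‖x - (pts i).1‖ with hg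
  set h : Fin n → ℝ → ℝ := fun i t => kT |t - (pts i).2| with hh
  set c : Matrix (Fin n) (Fin n) ℝ := Δ⁻¹ with hc
  set f : (EuclideanSpace ℝ (Fin d) × ℝ) → ℝ :=
    fun p => (fun i : Fin n => k p (pts i)) ⬝ᵥ c *ᵥ (fun i : Fin n => k p (pts i)) with hf
  have hcPSD : c.PosSemidef := hPD.inv.posSemidef
  have hf0 : ∀ p, 0 ≤ f p := by
    intro p
    simpa [hf] using hcPSD.dotProduct_mulVec_nonneg (fun i : Fin n => k p (pts i))
  -- pointwise bound
  have hpt : ∀ p, (Real.sqrt lam - σD p) ^ 2 ≤ f p := by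
    intro p
    have hσ : σ2D p = lam - f p := hσ2D p
    have h1 : σ2D p ≤ lam := by rw [hσ]; linarith [hf0 p]
    have ha2 : Real.sqrt lam ^ 2 = lam := Real.sq_sqrt hlam.le
    have hb0 : 0 ≤ Real.sqrt (σ2D p) := Real.sqrt_nonneg _
    have hba : Real.sqrt (σ2D p) ≤ Real.sqrt lam := Real.sqrt_le_sqrt h1
    have hb2 : σ2D p ≤ Real.sqrt (σ2D p) ^ 2 := by
      rcases le_or_gt 0 (σ2D p) with h2 | h2
      · rw [Real.sq_sqrt h2]
      · nlinarith [sq_nonneg (Real.sqrt (σ2D p))]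
    rw [hσD p]
    nlinarith [hb2, hba, hb0, ha2, hσ]
  -- expansion of f
  have hfexp : ∀ x t, f (x, t)
      = ∑ i, ∑ j, lam ^ 2 * c i j * (g i x * g j x) * (h i t * h j t) := by
    intro x t
    simp only [hf, dotProduct, mulVec, Finset.mul_sum]
    refine Finset.sum_congr rfl fun i _ => Finset.sum_congr rfl fun j _ => ?_
    rw [hk, hk]
    simp only [hg, hh]
    ring
  -- temporal integrals
  have hTeq : ∀ i j : Fin n, (fun t => h i t * h j t)
      = fun t => (fun τ => kT |τ| * kT |((pts j).2 - (pts i).2) - τ|) (t - (pts i).2) := by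
    intro i j
    funext t
    simp only [hh]
    congr 2
    · rw [abs_sub_comm]
      congr 1
      ring
  have hTint : ∀ i j : Fin n, IntegrableOn (fun t => h i t * h j t) (Set.Ioi t0) := by
    intro i j
    rw [hTeq i j]
    exact shift_Ioi_integrable
      (G := fun τ => kT |τ| * kT |((pts j).2 - (pts i).2) - τ|)
      (a := t0) (c := (pts i).2) (hintT (t0 - (pts i).2) ((pts j).2 - (pts i).2))
  have hTval : ∀ i j : Fin n, ∫ t in Set.Ioi t0, h i t * h j t
      = convT (t0 - (pts i).2) ((pts j).2 - (pts i).2) := by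
    intro i j
    rw [hconvT, hTeq i j]
    exact shift_Ioi_integral (fun τ => kT |τ| * kT |((pts j).2 - (pts i).2) - τ|) t0 (pts i).2
  -- spatial integrals
  have hSeq : ∀ i j : Fin n, (fun x => g i x * g j x)
      = fun x => (fun u => kS ‖u‖ * kS ‖((pts j).1 - (pts i).1) - u‖) (x - (pts i).1) := by
    intro i j
    funext x
    simp only [hg]
    rw [show (pts j).1 - (pts i).1 - (x - (pts i).1) = (pts j).1 - x from by abel,
      norm_sub_rev ((pts j).1) x]
  have hSint : ∀ i j : Fin n, Integrable (fun x => g i x * g j x) := by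
    intro i j
    rw [hSeq i j]
    exact (hintS ((pts j).1 - (pts i).1)).comp_sub_right (pts i).1
  have hSval : ∀ i j : Fin n, (∫ x, g i x * g j x) = convS ((pts j).1 - (pts i).1) := by
    intro i j
    rw [hconvS, hSeq i j]
    exact integral_sub_right_eq_self
      (fun u => kS ‖u‖ * kS ‖((pts j).1 - (pts i).1) - u‖) (pts i).1
  -- inner integral of f
  have hinner : ∀ x : EuclideanSpace ℝ (Fin d), (∫ t in Set.Ioi t0, f (x, t))
      = ∑ i, ∑ j, lam ^ 2 * c i j * convT (t0 - (pts i).2) ((pts j).2 - (pts i).2)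
        * (g i x * g j x) := by
    intro x
    calc (∫ t in Set.Ioi t0, f (x, t))
        = ∫ t in Set.Ioi t0, ∑ i, ∑ j,
            lam ^ 2 * c i j * (g i x * g j x) * (h i t * h j t) := by
          exact integral_congr_ae (Filter.Eventually.of_forall fun t => hfexp x t)
      _ = ∑ i, ∫ t in Set.Ioi t0, ∑ j,
            lam ^ 2 * c i j * (g i x * g j x) * (h i t * h j t) := by
          refine integral_finset_sum _ fun i _ => ?_
          exact integrable_finset_sum _ fun j _ => (hTint i j).const_mul _
      _ = ∑ i, ∑ j, ∫ t in Set.Ioi t0,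
            lam ^ 2 * c i j * (g i x * g j x) * (h i t * h j t) := by
          refine Finset.sum_congr rfl fun i _ => ?_
          exact integral_finset_sum _ fun j _ => (hTint i j).const_mul _
      _ = ∑ i, ∑ j, lam ^ 2 * c i j * convT (t0 - (pts i).2) ((pts j).2 - (pts i).2)
            * (g i x * g j x) := by
          refine Finset.sum_congr rfl fun i _ => Finset.sum_congr rfl fun j _ => ?_
          rw [integral_const_mul, hTval i j]
          ring
  -- the majorant
  have hIint : Integrable (fun x : EuclideanSpace ℝ (Fin d) =>
      ∑ i, ∑ j, lam ^ 2 * c i j * convT (t0 - (pts i).2) ((pts j).2 - (pts i).2)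
        * (g i x * g j x)) :=
    integrable_finset_sum _ fun i _ =>
      integrable_finset_sum _ fun j _ => (hSint i j).const_mul _
  have hI0 : ∀ x : EuclideanSpace ℝ (Fin d),
      0 ≤ ∑ i, ∑ j, lam ^ 2 * c i j * convT (t0 - (pts i).2) ((pts j).2 - (pts i).2)
        * (g i x * g j x) := by
    intro x
    rw [← hinner x]
    exact integral_nonneg fun t => hf0 _
  have hfTint : ∀ x, IntegrableOn (fun t => f (x, t)) (Set.Ioi t0) := by
    intro x
    have : (fun t => f (x, t))
        = fun t => ∑ i, ∑ j, lam ^ 2 * c i j * (g i x * g j x) * (h i t * h j t) := by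
      funext t; exact hfexp x t
    rw [this]
    exact integrable_finset_sum _ fun i _ =>
      integrable_finset_sum _ fun j _ => (hTint i j).const_mul _
  have hinnerle : ∀ x : EuclideanSpace ℝ (Fin d),
      (∫ t in Set.Ioi t0, (Real.sqrt lam - σD (x, t)) ^ 2)
        ≤ ∑ i, ∑ j, lam ^ 2 * c i j * convT (t0 - (pts i).2) ((pts j).2 - (pts i).2)
          * (g i x * g j x) := by
    intro x
    rw [← hinner x]
    exact integral_mono_of_nonneg (Filter.Eventually.of_forall fun t => sq_nonneg _)
      (hfTint x) (Filter.Eventually.of_forall fun t => hpt (x, t))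
  -- chain of inequalities
  have step1 : (∫ x in S, ∫ t in Set.Ioi t0, (Real.sqrt lam - σD (x, t)) ^ 2)
      ≤ ∫ x in S, ∑ i, ∑ j, lam ^ 2 * c i j
          * convT (t0 - (pts i).2) ((pts j).2 - (pts i).2) * (g i x * g j x) :=
    integral_mono_of_nonneg
      (Filter.Eventually.of_forall fun x => integral_nonneg fun t => sq_nonneg _)
      hIint.integrableOn (Filter.Eventually.of_forall fun x => hinnerle x)
  have step2 : (∫ x in S, ∑ i, ∑ j, lam ^ 2 * c i j
          * convT (t0 - (pts i).2) ((pts j).2 - (pts i).2) * (g i x * g j x))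
      ≤ ∫ x, ∑ i, ∑ j, lam ^ 2 * c i j
          * convT (t0 - (pts i).2) ((pts j).2 - (pts i).2) * (g i x * g j x) :=
    setIntegral_le_integral hIint (Filter.Eventually.of_forall fun x => hI0 x)
  have step3 : (∫ x, ∑ i, ∑ j, lam ^ 2 * c i j
          * convT (t0 - (pts i).2) ((pts j).2 - (pts i).2) * (g i x * g j x))
      = lam ^ 2 * (c * C).trace := by
    rw [integral_finset_sum _ (fun i _ =>
      integrable_finset_sum _ fun j _ => (hSint i j).const_mul _)]
    have hval : ∀ i : Fin n, (∫ x, ∑ j, lam ^ 2 * c i j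
          * convT (t0 - (pts i).2) ((pts j).2 - (pts i).2) * (g i x * g j x))
        = ∑ j, lam ^ 2 * c i j * convT (t0 - (pts i).2) ((pts j).2 - (pts i).2)
          * convS ((pts j).1 - (pts i).1) := by
      intro i
      rw [integral_finset_sum _ (fun j _ => (hSint i j).const_mul _)]
      exact Finset.sum_congr rfl fun j _ => by rw [integral_const_mul, hSval i j]
    simp only [hval]
    have hCsym : ∀ i j : Fin n, C j i
        = convS ((pts j).1 - (pts i).1) * convT (t0 - (pts i).2) ((pts j).2 - (pts i).2) := by
      intro i j
      rw [hC j i, ← hSval j i, ← hTval j i, ← hSval i j, ← hTval i j]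
      congr 1
      · exact integral_congr_ae (Filter.Eventually.of_forall fun x => mul_comm _ _)
      · exact integral_congr_ae (Filter.Eventually.of_forall fun t => mul_comm _ _)
    rw [Matrix.trace, Finset.mul_sum]
    refine Finset.sum_congr rfl fun i _ => ?_
    rw [Matrix.diag_apply, Matrix.mul_apply, Finset.mul_sum]
    exact Finset.sum_congr rfl fun j _ => by rw [hCsym i j]; ring
  exact le_of_le_of_eq (le_trans step1 step2) step3
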